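/- Let ε > δ > 0 with δ < 1, and let L be a ray emanating from a point p on the circle ∂B(z,ε) whose angle with the tangent line to the circle at p is at least δ (i.e., L is not nearly tangent) and which enters B(z,ε). Then the line containing L meets B(z,ε) at some point a with dist(a, ∂B(z,ε)) > εδ²/4. -/

import Mathlib

open Metric Set Real

theorem aux17 (ε δ d q : ℝ) (hδ : 0 < δ) (hδ1 : δ < 1) (hε : 0 < ε) (hd0 : 0 ≤ d)
    (hxz : d ^ 2 = ε ^ 2 - q ^ 2) (hq : ε * (δ - δ ^ 3 / 4) < q) :
    ε * δ ^ 2 / 4 < ε - d := by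
  have hδ2 : δ ^ 2 < 1 := by nlinarith
  have hpos : 0 < δ - δ ^ 3 / 4 := by nlinarith [mul_lt_mul_of_pos_left hδ2 hδ]
  have hqpos : 0 < q := lt_trans (mul_pos hε hpos) hq
  have hq2 : (ε * (δ - δ ^ 3 / 4)) ^ 2 < q ^ 2 := by nlinarith [mul_pos hε hpos]
  by_contra hk
  push_neg at hk
  have h1 : ε * (1 - δ ^ 2 / 4) ≤ d := by nlinarith
  have h2 : 0 < ε * (1 - δ ^ 2 / 4) := by nlinarith
  have h3 : (ε * (1 - δ ^ 2 / 4)) ^ 2 ≤ d ^ 2 := by nlinarith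
  have h4 : (1 : ℝ) < (1 - δ ^ 2 / 4) ^ 2 + (δ - δ ^ 3 / 4) ^ 2 := by
    nlinarith [sq_nonneg δ, mul_pos hδ hδ, sq_nonneg (δ * δ)]
  nlinarith [mul_pos hε hε]

theorem stmt17 (ε δ : ℝ) (hδ : 0 < δ) (hδε : δ < ε) (hδ1 : δ < 1)
    (z p v : EuclideanSpace ℝ (Fin 2)) (hp : p ∈ sphere z ε) (hv : ‖v‖ = 1)
    (hangle : InnerProductGeometry.angle v (z - p) ≤ π / 2 - δ) :
    ∃ t : ℝ, 0 ≤ t ∧ (p + t • v) ∈ Metric.ball z ε ∧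
      ε * δ ^ 2 / 4 < Metric.infDist (p + t • v) (sphere z ε) := by
  have hε : 0 < ε := lt_trans hδ hδε
  have hzp : ‖z - p‖ = ε := by
    rw [mem_sphere, dist_eq_norm] at hp
    rw [← norm_neg]; simpa using hp
  set c : ℝ := (inner ℝ (v) (z - p) : ℝ) with hc
  have hcos : Real.cos (InnerProductGeometry.angle v (z - p)) = c / ε := by
    rw [InnerProductGeometry.cos_angle, hv, hzp, one_mul]
  have hδπ : δ < π / 2 := lt_of_lt_of_le hδ1 (by
    have := Real.pi_gt_three; linarith)
  have hcosge : Real.sin δ ≤ c / ε := by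
    rw [← hcos, ← Real.cos_pi_div_two_sub δ]
    apply Real.cos_le_cos_of_nonneg_of_le_pi
    · exact InnerProductGeometry.angle_nonneg _ _
    · linarith [Real.pi_pos]
    · exact hangle
  have hsin : δ - δ ^ 3 / 4 < Real.sin δ := by
    have := Real.sin_gt_sub_cube hδ; linarith [pow_pos hδ 3]
  have hcge : ε * (δ - δ ^ 3 / 4) < c := by
    have h1 : ε * Real.sin δ ≤ c := by
      have := mul_le_mul_of_nonneg_left hcosge hε.le
      calc ε * Real.sin δ ≤ ε * (c / ε) := this
        _ = c := by field_simp
    nlinarith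
  have hδ2 : δ ^ 2 < 1 := by nlinarith
  have hpos : 0 < δ - δ ^ 3 / 4 := by nlinarith [mul_lt_mul_of_pos_left hδ2 hδ]
  have hcpos : 0 < c := lt_trans (mul_pos hε hpos) hcge
  -- distance computation
  have hxz : dist (p + c • v) z ^ 2 = ε ^ 2 - c ^ 2 := by
    rw [dist_eq_norm]
    have h1 : p + c • v - z = (p - z) + c • v := by abel
    rw [h1, ← real_inner_self_eq_norm_sq]
    rw [inner_add_add_self, real_inner_smul_left, real_inner_smul_right,
      real_inner_smul_left, real_inner_smul_right]
    have h2 : (inner ℝ (p - z) (v) : ℝ) = -c := by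
      rw [hc, real_inner_comm]
      rw [show p - z = -(z - p) by abel, inner_neg_right]
    have h3 : (inner ℝ (p - z) (p - z) : ℝ) = ε ^ 2 := by
      rw [real_inner_self_eq_norm_sq, ← norm_neg]
      rw [show -(p - z) = z - p by abel, hzp]
    have h4 : (inner ℝ (v) (v) : ℝ) = 1 := by
      rw [real_inner_self_eq_norm_sq, hv]; norm_num
    have h5 : (inner ℝ (v) (p - z) : ℝ) = -c := by rw [real_inner_comm]; exact h2
    rw [h2, h3, h4, h5]; ring
  have hd0 : 0 ≤ dist (p + c • v) z := dist_nonneg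
  have hdlt : dist (p + c • v) z < ε := by nlinarith
  refine ⟨c, hcpos.le, mem_ball.mpr hdlt, ?_⟩
  have hne : (sphere z ε).Nonempty :=
    (NormedSpace.sphere_nonempty).mpr hε.le
  have hle : ε - dist (p + c • v) z ≤ Metric.infDist (p + c • v) (sphere z ε) := by
    rw [← not_lt, Metric.infDist_lt_iff hne]
    rintro ⟨y, hy, hlt⟩
    rw [mem_sphere] at hy
    have := dist_triangle y (p + c • v) z
    rw [dist_comm y (p + c • v)] at this
    linarith
  have hc2 : (ε * (δ - δ ^ 3 / 4)) ^ 2 < c ^ 2 := by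
    have := mul_pos hε hpos
    nlinarith
  have key := aux17 ε δ (dist (p + c • v) z) c hδ hδ1 hε hd0 hxz hcge
  linarith
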